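/- Let Λ_d = {λ ∈ ℝ^d : λᵢ ≥ 0, ∑ᵢ λᵢ = 1} be the d-dimensional simplex, P a set (of probability distributions), and T₁,…,T_d : P → ℝ functions such that the set A = {a ∈ ℝ^d : ∃ p ∈ P, aᵢ ≤ Tᵢ(p) for all i} is convex. Then sup_{p ∈ P} min_{λ ∈ Λ_d} ∑ᵢ λᵢ Tᵢ(p) = min_{λ ∈ Λ_d} sup_{p ∈ P} ∑ᵢ λᵢ Tᵢ(p), assuming both sides are finite. -/

import Mathlib

open scoped BigOperators

/-- Corollary of Terkelsen's min-max theorem: if the down-set `A` determined by the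
functionals `T i` is convex, then sup-min equals min-sup over the simplex,
assuming both sides are finite (the relevant families are bounded above). -/
theorem minimax_simplex {d : ℕ} (hd : 0 < d) {P : Type*} [Nonempty P]
    (T : Fin d → P → ℝ)
    (hA : Convex ℝ {a : Fin d → ℝ | ∃ p : P, ∀ i : Fin d, a i ≤ T i p})
    (hfin₁ : BddAbove (Set.range fun p : P =>
      ⨅ l : stdSimplex ℝ (Fin d), ∑ i, (l : Fin d → ℝ) i * T i p))
    (hfin₂ : ∀ l : stdSimplex ℝ (Fin d),
      BddAbove (Set.range fun p : P => ∑ i, (l : Fin d → ℝ) i * T i p)) :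
    (⨆ p : P, ⨅ l : stdSimplex ℝ (Fin d), ∑ i, (l : Fin d → ℝ) i * T i p)
      = ⨅ l : stdSimplex ℝ (Fin d), ⨆ p : P, ∑ i, (l : Fin d → ℝ) i * T i p := by
  have hFin : Nonempty (Fin d) := ⟨⟨0, hd⟩⟩
  haveI : Nonempty (stdSimplex ℝ (Fin d)) := ⟨⟨_, single_mem_stdSimplex ℝ ⟨0, hd⟩⟩⟩
  set c : ℝ := ⨆ p : P, ⨅ l : stdSimplex ℝ (Fin d), ∑ i, (l : Fin d → ℝ) i * T i p with hc
  -- boundedness below of the inner inf family, for each p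
  have hbb : ∀ p : P, BddBelow (Set.range fun l : stdSimplex ℝ (Fin d) =>
      ∑ i, (l : Fin d → ℝ) i * T i p) := by
    intro p
    refine ⟨Finset.univ.inf' Finset.univ_nonempty (fun i => T i p), ?_⟩
    rintro x ⟨l, rfl⟩
    calc Finset.univ.inf' Finset.univ_nonempty (fun i => T i p)
        = ∑ i, (l : Fin d → ℝ) i * Finset.univ.inf' Finset.univ_nonempty (fun i => T i p) := by
          rw [← Finset.sum_mul, stdSimplex.sum_eq_one l, one_mul]
      _ ≤ ∑ i, (l : Fin d → ℝ) i * T i p := by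
          refine Finset.sum_le_sum fun i _ => ?_
          exact mul_le_mul_of_nonneg_left (Finset.inf'_le _ (Finset.mem_univ i)) (l.2.1 i)
  -- easy direction: c ≤ sup_p l·T p for each l
  have heasy : ∀ l : stdSimplex ℝ (Fin d),
      c ≤ ⨆ p : P, ∑ i, (l : Fin d → ℝ) i * T i p := by
    intro l
    exact ciSup_mono (hfin₂ l) fun p => ciInf_le (hbb p) l
  have hbb₂ : BddBelow (Set.range fun l : stdSimplex ℝ (Fin d) =>
      ⨆ p : P, ∑ i, (l : Fin d → ℝ) i * T i p) := by
    exact ⟨c, by rintro x ⟨l, rfl⟩; exact heasy l⟩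
  refine le_antisymm (le_ciInf heasy) ?_
  -- the sets A and B
  set A : Set (Fin d → ℝ) := {a : Fin d → ℝ | ∃ p : P, ∀ i : Fin d, a i ≤ T i p} with hAdef
  set B : Set (Fin d → ℝ) := {x : Fin d → ℝ | ∀ i, c < x i} with hBdef
  have hBopen : IsOpen B := by
    have : B = ⋂ i, (fun x : Fin d → ℝ => x i) ⁻¹' Set.Ioi c := by
      ext x; simp [hBdef, Set.mem_iInter]
    rw [this]
    exact isOpen_iInter_of_finite fun i => (continuous_apply i).isOpen_preimage _ isOpen_Ioi
  have hBconv : Convex ℝ B := by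
    intro x hx y hy a b ha hb hab
    intro i
    simp only [Pi.add_apply, Pi.smul_apply, smul_eq_mul]
    calc c = a * c + b * c := by rw [← add_mul, hab, one_mul]
      _ < a * x i + b * y i := by
          rcases eq_or_lt_of_le ha with h | h
          · rw [← h]; simpa using mul_lt_mul_of_pos_left (hy i) (by linarith)
          · rcases eq_or_lt_of_le hb with h' | h'
            · rw [← h']; simpa using mul_lt_mul_of_pos_left (hx i) (by linarith)
            · exact add_lt_add (mul_lt_mul_of_pos_left (hx i) h)
                (mul_lt_mul_of_pos_left (hy i) h')
  have hdisj : Disjoint B A := by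
    rw [Set.disjoint_left]
    rintro x hxB ⟨p, hp⟩
    -- inf_l l·T p ≤ c, but also ≥ min_i x i > c
    have h1 : (⨅ l : stdSimplex ℝ (Fin d), ∑ i, (l : Fin d → ℝ) i * T i p) ≤ c :=
      le_ciSup hfin₁ p
    set m : ℝ := Finset.univ.inf' Finset.univ_nonempty x with hm
    have hmc : c < m := by
      rw [hm, Finset.lt_inf'_iff]
      exact fun i _ => hxB i
    have h2 : m ≤ ⨅ l : stdSimplex ℝ (Fin d), ∑ i, (l : Fin d → ℝ) i * T i p := by
      refine le_ciInf fun l => ?_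
      calc m = ∑ i, (l : Fin d → ℝ) i * m := by rw [← Finset.sum_mul, stdSimplex.sum_eq_one l, one_mul]
        _ ≤ ∑ i, (l : Fin d → ℝ) i * T i p := by
            refine Finset.sum_le_sum fun i _ => ?_
            exact mul_le_mul_of_nonneg_left
              ((Finset.inf'_le _ (Finset.mem_univ i)).trans (hp i)) (l.2.1 i)
    linarith
  obtain ⟨f, u, hfB, hfA⟩ := geometric_hahn_banach_open hBconv hBopen hA hdisj
  -- expansion of f
  have hexp : ∀ x : Fin d → ℝ, f x = ∑ i, x i * f (Pi.single i 1) := by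
    intro x
    have hx : x = ∑ i, x i • (Pi.single i 1 : Fin d → ℝ) := by
      funext j
      simp [Pi.single_apply, Finset.sum_ite_eq', eq_comm]
    conv_lhs => rw [hx]
    rw [map_sum]
    simp [smul_eq_mul]
  set g : Fin d → ℝ := fun i => -(f (Pi.single i 1)) with hg
  -- const (c+1) ∈ B
  have hconstB : ∀ ε : ℝ, 0 < ε → (fun _ : Fin d => c + ε) ∈ B := by
    intro ε hε i; simpa [hBdef] using by linarith
  have hgnonneg : ∀ i, 0 ≤ g i := by
    intro i
    by_contra h
    push_neg at h
    have hfi : 0 < f (Pi.single i 1) := by simp [hg] at h; linarith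
    have hfc : f (fun _ : Fin d => c + 1) < u := hfB _ (hconstB 1 one_pos)
    set t : ℝ := (u - f (fun _ : Fin d => c + 1)) / f (Pi.single i 1) + 1 with ht
    have htpos : 0 < t := by
      rw [ht]
      have : 0 < (u - f (fun _ : Fin d => c + 1)) / f (Pi.single i 1) :=
        div_pos (by linarith) hfi
      linarith
    have hbB : ((fun _ : Fin d => c + 1) + t • (Pi.single i 1 : Fin d → ℝ)) ∈ B := by
      intro j
      simp only [Pi.add_apply, Pi.smul_apply, smul_eq_mul]
      have : 0 ≤ t * (Pi.single i 1 : Fin d → ℝ) j := by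
        apply mul_nonneg htpos.le
        rcases eq_or_ne j i with rfl | hne
        · simp
        · simp [Pi.single_apply, hne]
      linarith
    have hlt := hfB _ hbB
    rw [map_add, map_smul, smul_eq_mul] at hlt
    have heq : (f fun _ : Fin d => c + 1) + t * f (Pi.single i 1) = u + f (Pi.single i 1) := by
      rw [ht]; field_simp; ring
    linarith
  set S : ℝ := ∑ i, g i with hS
  have hSnonneg : 0 ≤ S := Finset.sum_nonneg fun i _ => hgnonneg i
  have hSpos : 0 < S := by
    rcases eq_or_lt_of_le hSnonneg with h | h
    · exfalso
      have hg0 : ∀ i, g i = 0 := by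
        intro i
        have := (Finset.sum_eq_zero_iff_of_nonneg (fun i _ => hgnonneg i)).mp h.symm
        exact this i (Finset.mem_univ i)
      have hf0 : ∀ x : Fin d → ℝ, f x = 0 := by
        intro x
        rw [hexp]
        refine Finset.sum_eq_zero fun i _ => ?_
        have := hg0 i
        simp [hg] at this
        simp [this]
      obtain ⟨p⟩ := ‹Nonempty P›
      have hTA : (fun i => T i p) ∈ A := ⟨p, fun i => le_refl _⟩
      have h1 := hfA _ hTA
      have h2 := hfB _ (hconstB 1 one_pos)
      rw [hf0] at h1 h2
      linarith
    · exact h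
  -- c * S ≥ -u
  have hcS : -u ≤ c * S := by
    by_contra h
    push_neg at h
    set ε : ℝ := (-u - c * S) / S with hε
    have hεpos : 0 < ε := by
      rw [hε]; exact div_pos (by linarith) hSpos
    have := hfB _ (hconstB ε hεpos)
    rw [hexp] at this
    have hsum : ∑ i, (fun _ : Fin d => c + ε) i * f (Pi.single i 1) = -((c + ε) * S) := by
      rw [hS, Finset.mul_sum, ← Finset.sum_neg_distrib]
      refine Finset.sum_congr rfl fun i _ => ?_
      simp only [hg]; ring
    rw [hsum] at this
    have : -u < (c + ε) * S := by linarith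
    rw [hε] at this
    rw [add_mul, div_mul_cancel₀ _ hSpos.ne'] at this
    linarith
  -- the separating simplex point
  have hl₀mem : (fun i => g i / S) ∈ stdSimplex ℝ (Fin d) := by
    constructor
    · exact fun i => div_nonneg (hgnonneg i) hSpos.le
    · rw [← Finset.sum_div, ← hS, div_self hSpos.ne']
  set l₀ : stdSimplex ℝ (Fin d) := ⟨fun i => g i / S, hl₀mem⟩ with hl₀
  have hkey : ∀ p : P, ∑ i, (l₀ : Fin d → ℝ) i * T i p ≤ c := by
    intro p
    have hTA : (fun i => T i p) ∈ A := ⟨p, fun i => le_refl _⟩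
    have h1 := hfA _ hTA
    rw [hexp] at h1
    have hsum : ∑ i, T i p * f (Pi.single i 1) = -∑ i, T i p * g i := by
      rw [← Finset.sum_neg_distrib]
      refine Finset.sum_congr rfl fun i _ => ?_
      simp only [hg]; ring
    rw [hsum] at h1
    have h2 : ∑ i, T i p * g i ≤ -u := by linarith
    have h3 : ∑ i, (l₀ : Fin d → ℝ) i * T i p = (∑ i, T i p * g i) / S := by
      rw [Finset.sum_div]
      refine Finset.sum_congr rfl fun i _ => ?_
      show g i / S * T i p = T i p * g i / S; ring
    rw [h3]
    rw [div_le_iff₀ hSpos]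
    calc ∑ i, T i p * g i ≤ -u := h2
      _ ≤ c * S := hcS
  calc (⨅ l : stdSimplex ℝ (Fin d), ⨆ p : P, ∑ i, (l : Fin d → ℝ) i * T i p)
      ≤ ⨆ p : P, ∑ i, (l₀ : Fin d → ℝ) i * T i p := ciInf_le hbb₂ l₀
    _ ≤ c := ciSup_le hkey
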